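/- Let d ≥ 3 and let z_1, …, z_{d+1} ∈ ℤ^d be such that both z_1, …, z_d and z_2, …, z_{d+1} are bases of ℤ^d, z̲_2, …, z̲_d are linearly independent and z̲_3, …, z̲_{d+1} are linearly independent in ℝ^{d−1}, and |z̲_1| ≤ |z̲_2| ≤ |z̲_3| ≤ |z̲_4| with z̲_1 ≠ 0. Suppose also that α_3 ∈ 𝔖_2 and ⟨α_3, z_2⟩ · ⟨α_3, z_1⟩ > 0. Then for each α ∈ 𝔖_3 we have ⟨α, z_2⟩ · ⟨α_2, z_1⟩ > 0. -/

import Mathlib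

open scoped InnerProductSpace

noncomputable section

/-- `ℝ^n` with the Euclidean structure. -/
abbrev E (n : ℕ) : Type := EuclideanSpace ℝ (Fin n)

/-- The projection `x ↦ x̲` forgetting the last coordinate. -/
def pr (d : ℕ) (x : E d) : E (d - 1) :=
  WithLp.toLp 2 (fun i : Fin (d - 1) => x (Fin.castLE (Nat.sub_le d 1) i))

/-- The canonical embedding of `ℤ^d` into `ℝ^d`. -/
def toE (d : ℕ) (z : Fin d → ℤ) : E d := WithLp.toLp 2 (fun i => (z i : ℝ))

/-- The `m`-dimensional volume of the parallelepiped spanned by `v 0, …, v (m-1)`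
(square root of the Gram determinant). -/
def gramVol {n m : ℕ} (v : Fin m → E n) : ℝ :=
  Real.sqrt ((Matrix.of (fun i j : Fin m => ⟪v i, v j⟫_ℝ)).det)

/-- `z` is a best approximation vector for the linear form `L_α : x ↦ ⟪α, x⟫`. -/
def IsBestApprox (d : ℕ) (α : E d) (z : Fin d → ℤ) : Prop :=
  pr d (toE d z) ≠ 0 ∧
  ∀ z' : Fin d → ℤ, pr d (toE d z') ≠ 0 →
    (‖pr d (toE d z')‖ ≤ ‖pr d (toE d z)‖ → |⟪α, toE d z⟫_ℝ| ≤ |⟪α, toE d z'⟫_ℝ|) ∧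
    (‖pr d (toE d z')‖ < ‖pr d (toE d z)‖ → |⟪α, toE d z⟫_ℝ| < |⟪α, toE d z'⟫_ℝ|)

/-- `det Λ̲_{k,l}` for a sequence of integer vectors: the `l`-dimensional volume of the
parallelepiped spanned by `z̲_k, …, z̲_{k+l-1}`. -/
def detL (d : ℕ) (z : ℕ → Fin d → ℤ) (k l : ℕ) : ℝ :=
  gramVol (fun i : Fin l => pr d (toE d (z (k + i.1))))

/-- `D_{k,l} = det Λ̲_{k,l} / |z̲_k|^l`. -/
def Dq (d : ℕ) (z : ℕ → Fin d → ℤ) (k l : ℕ) : ℝ :=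
  detL d z k l / ‖pr d (toE d (z k))‖ ^ l

/-- `B_k = |z̲_{k+1}| / |z̲_k|`. -/
def Bq (d : ℕ) (z : ℕ → Fin d → ℤ) (k : ℕ) : ℝ :=
  ‖pr d (toE d (z (k + 1)))‖ / ‖pr d (toE d (z k))‖

/-- `R_k = 1 / (2 |z̲_{k+1}| det Λ̲_{k,d-1})`. -/
def Rq (d : ℕ) (z : ℕ → Fin d → ℤ) (k : ℕ) : ℝ :=
  1 / (2 * ‖pr d (toE d (z (k + 1)))‖ * detL d z k (d - 1))

/-- `v 0, …, v (d-1)` form a basis of the lattice `ℤ^d`. -/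
def IsZBasis (d : ℕ) (v : Fin d → Fin d → ℤ) : Prop :=
  IsUnit ((Matrix.of (fun i j : Fin d => v j i)).det)


lemma abs_det_col {n : ℕ} (M : Matrix (Fin (n+1)) (Fin (n+1)) ℝ) (i0 j0 : Fin (n+1))
    (h : ∀ i, i ≠ i0 → M i j0 = 0) :
    |M.det| = |M i0 j0| * |(M.submatrix i0.succAbove j0.succAbove).det| := by
  rw [Matrix.det_succ_column M j0, Finset.sum_eq_single i0]
  · rw [abs_mul, abs_mul, abs_pow, abs_neg, abs_one, one_pow, one_mul]
  · intro b _ hb; rw [h b hb]; ring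
  · intro h'; exact absurd (Finset.mem_univ i0) h'

lemma abs_det_row {n : ℕ} (M : Matrix (Fin (n+1)) (Fin (n+1)) ℝ) (i0 j0 : Fin (n+1))
    (h : ∀ j, j ≠ j0 → M i0 j = 0) :
    |M.det| = |M i0 j0| * |(M.submatrix i0.succAbove j0.succAbove).det| := by
  rw [Matrix.det_succ_row M i0, Finset.sum_eq_single j0]
  · rw [abs_mul, abs_mul, abs_pow, abs_neg, abs_one, one_pow, one_mul]
  · intro b _ hb; rw [h b hb]; ring
  · intro h'; exact absurd (Finset.mem_univ j0) h'

lemma gramVol_eq {n : ℕ} (v : Fin n → E n) :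
    gramVol v = |(Matrix.of (fun i j : Fin n => v i j)).det| := by
  have h : (Matrix.of (fun i j : Fin n => ⟪v i, v j⟫_ℝ)) =
      (Matrix.of fun i j : Fin n => v i j) *
        Matrix.transpose (Matrix.of fun i j : Fin n => v i j) := by
    ext i j
    simp [Matrix.mul_apply, PiLp.inner_apply, RCLike.inner_apply, conj_trivial]
    exact Finset.sum_congr rfl fun _ _ => mul_comm _ _
  rw [gramVol, h, Matrix.det_mul, Matrix.det_transpose, ← sq, Real.sqrt_sq_eq_abs]

lemma gramVol_pr {m : ℕ} (w : Fin (m + 2) → E (m + 3 - 1)) :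
    gramVol w = |(Matrix.of (fun i j : Fin (m + 2) => w i j)).det| :=
  gramVol_eq (n := m + 2) w

lemma key {n : ℕ} (v : Fin (n+1) → E (n+1)) (α : E (n+1))
    (hα : α (Fin.last n) = 1)
    (hperp : ∀ j : Fin n, ⟪α, v j.succ⟫_ℝ = 0) :
    |(Matrix.of (fun i j : Fin (n+1) => v j i)).det| =
      |⟪α, v 0⟫_ℝ| * |(Matrix.of (fun i j : Fin n => v j.succ i.castSucc)).det| := by
  set T : Matrix (Fin (n+1)) (Fin (n+1)) ℝ :=
    Matrix.of (fun i j => if i = Fin.last n then α j else if i = j then 1 else 0) with hT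
  have hTdet : |T.det| = 1 := by
    rw [abs_det_col T (Fin.last n) (Fin.last n)
      (fun i hi => by simp [hT, hi, fun h => hi (h : i = Fin.last n)])]
    have h1 : T (Fin.last n) (Fin.last n) = 1 := by simp [hT, hα]
    have h2 : T.submatrix (Fin.last n).succAbove (Fin.last n).succAbove = 1 := by
      ext i j
      simp [hT, Matrix.submatrix_apply, Fin.succAbove_last, (Fin.castSucc_lt_last i).ne,
        Matrix.one_apply, Fin.castSucc_inj]
    rw [h1, h2, Matrix.det_one]; norm_num
  set Z : Matrix (Fin (n+1)) (Fin (n+1)) ℝ := Matrix.of (fun i j => v j i) with hZ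
  have hM : T * Z = Matrix.of (fun i j => if i = Fin.last n then ⟪α, v j⟫_ℝ else v j i) := by
    ext i j
    by_cases hi : i = Fin.last n
    · simp [Matrix.mul_apply, hT, hZ, hi, PiLp.inner_apply, RCLike.inner_apply, conj_trivial]
      exact Finset.sum_congr rfl fun _ _ => mul_comm _ _
    · simp [Matrix.mul_apply, hT, hZ, hi, Finset.sum_ite_eq]
  have habs : |Z.det| = |(T * Z).det| := by
    rw [Matrix.det_mul, abs_mul, hTdet, one_mul]
  rw [habs, abs_det_row (T * Z) (Fin.last n) 0 ?hrow]
  case hrow =>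
    intro j hj
    obtain ⟨j', rfl⟩ := Fin.eq_succ_of_ne_zero hj
    rw [hM]
    simp only [Matrix.of_apply, if_pos rfl]
    exact hperp j'
  have hsub : (T * Z).submatrix (Fin.last n).succAbove (0 : Fin (n+1)).succAbove
      = Matrix.of (fun i j : Fin n => v j.succ i.castSucc) := by
    ext i j
    rw [Matrix.submatrix_apply, hM]
    simp [Fin.succAbove_last, Fin.succAbove_zero, (Fin.castSucc_lt_last i).ne]
  rw [hsub, hM]
  simp

lemma norm_pr_le {m : ℕ} (x : E (m + 3)) : ‖pr (m + 3) x‖ ≤ ‖x‖ := by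
  rw [EuclideanSpace.norm_eq, EuclideanSpace.norm_eq]
  apply Real.sqrt_le_sqrt
  rw [Fin.sum_univ_castSucc (f := fun i : Fin (m + 3) => ‖x i‖ ^ 2)]
  have h : (∑ i : Fin (m + 3 - 1), ‖pr (m + 3) x i‖ ^ 2)
      = ∑ i : Fin (m + 2), ‖x i.castSucc‖ ^ 2 := rfl
  rw [h]
  exact le_add_of_nonneg_right (by positivity)

lemma inner_pr {m : ℕ} (x y : E (m + 3)) (hx : x (Fin.last (m + 2)) = 0) :
    ⟪x, y⟫_ℝ = ⟪pr (m + 3) x, pr (m + 3) y⟫_ℝ := by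
  have h1 : ⟪x, y⟫_ℝ = ∑ i : Fin (m + 3), x i * y i := by
    simp [PiLp.inner_apply, RCLike.inner_apply, conj_trivial]
    exact Finset.sum_congr rfl fun _ _ => mul_comm _ _
  have h2 : ⟪pr (m + 3) x, pr (m + 3) y⟫_ℝ
      = ∑ i : Fin (m + 2), x i.castSucc * y i.castSucc := by
    have : ⟪pr (m + 3) x, pr (m + 3) y⟫_ℝ
        = ∑ i : Fin (m + 3 - 1), pr (m + 3) x i * pr (m + 3) y i := by
      simp [PiLp.inner_apply, RCLike.inner_apply, conj_trivial]
      exact Finset.sum_congr rfl fun _ _ => mul_comm _ _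
    rw [this]
    rfl
  rw [h1, h2, Fin.sum_univ_castSucc (f := fun i : Fin (m + 3) => x i * y i), hx]
  ring

lemma abs_inner_le_pr {m : ℕ} (x y : E (m + 3)) (hx : x (Fin.last (m + 2)) = 0) :
    |⟪x, y⟫_ℝ| ≤ ‖x‖ * ‖pr (m + 3) y‖ := by
  rw [inner_pr x y hx]
  calc |⟪pr (m + 3) x, pr (m + 3) y⟫_ℝ| ≤ ‖pr (m + 3) x‖ * ‖pr (m + 3) y‖ :=
        abs_real_inner_le_norm _ _
    _ ≤ ‖x‖ * ‖pr (m + 3) y‖ :=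
        mul_le_mul_of_nonneg_right (norm_pr_le x) (norm_nonneg _)


lemma signchase (a b c e : ℝ) (hsign : 0 < b * e) (hbound1 : |a - b| ≤ |b| / 2)
    (hbound2 : |e - c| ≤ |c| / 2) (hcpos : 0 < |c|) : 0 < a * c := by
  rw [abs_le] at hbound1 hbound2
  rcases lt_trichotomy b 0 with hb0 | hb0 | hb0
  · rw [abs_of_neg hb0] at hbound1
    have he0 : e < 0 := by nlinarith
    have hc0 : c < 0 := by
      rcases le_or_gt 0 c with h | h
      · rw [abs_of_nonneg h] at hbound2; linarith
      · exact h
    have ha0 : a < 0 := by linarith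
    exact mul_pos_of_neg_of_neg ha0 hc0
  · rw [hb0] at hsign; simp at hsign
  · rw [abs_of_pos hb0] at hbound1
    have he0 : 0 < e := by nlinarith
    have hc0 : 0 < c := by
      rcases lt_or_ge 0 c with h | h
      · exact h
      · rw [abs_of_nonpos h] at hbound2; linarith
    have ha0 : 0 < a := by linarith
    exact mul_pos ha0 hc0


theorem stmt8 (d : ℕ) (hd : 3 ≤ d) (z : ℕ → Fin d → ℤ)
    (hbasis1 : IsZBasis d (fun j => z (j.1 + 1)))
    (hbasis2 : IsZBasis d (fun j => z (j.1 + 2)))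
    (hlip2 : LinearIndependent ℝ (fun i : Fin (d - 1) => pr d (toE d (z (i.1 + 2)))))
    (hlip3 : LinearIndependent ℝ (fun i : Fin (d - 1) => pr d (toE d (z (i.1 + 3)))))
    (hz1 : pr d (toE d (z 1)) ≠ 0)
    (h12 : ‖pr d (toE d (z 1))‖ ≤ ‖pr d (toE d (z 2))‖)
    (h23 : ‖pr d (toE d (z 2))‖ ≤ ‖pr d (toE d (z 3))‖)
    (h34 : ‖pr d (toE d (z 3))‖ ≤ ‖pr d (toE d (z 4))‖)
    (α2 : E d) (hα2pi : α2 ⟨d - 1, by omega⟩ = 1)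
    (hα2perp : ∀ i : Fin (d - 1), ⟪α2, toE d (z (i.1 + 2))⟫_ℝ = 0)
    (α3 : E d) (hα3pi : α3 ⟨d - 1, by omega⟩ = 1)
    (hα3perp : ∀ i : Fin (d - 1), ⟪α3, toE d (z (i.1 + 3))⟫_ℝ = 0)
    (hα3S2 : ‖α3 - α2‖ ≤ Rq d z 2)
    (hsign : 0 < ⟪α3, toE d (z 2)⟫_ℝ * ⟪α3, toE d (z 1)⟫_ℝ)
    (α : E d) (hαpi : α ⟨d - 1, by omega⟩ = 1) (hαS3 : ‖α - α3‖ ≤ Rq d z 3) :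
    0 < ⟪α, toE d (z 2)⟫_ℝ * ⟪α2, toE d (z 1)⟫_ℝ := by
  obtain ⟨m, rfl⟩ : ∃ m, d = m + 3 := ⟨d - 3, by omega⟩
  -- the two determinant identities
  have hid : ∀ (k : ℕ) (β : E (m + 3)), IsZBasis (m + 3) (fun j => z (j.1 + k)) →
      β (Fin.last (m + 2)) = 1 →
      (∀ i : Fin (m + 2), ⟪β, toE (m + 3) (z (k + i.1 + 1))⟫_ℝ = 0) →
      |⟪β, toE (m + 3) (z k)⟫_ℝ| * detL (m + 3) z (k + 1) (m + 2) = 1 := by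
    intro k β hbasis hβ hβperp
    have hk := key (fun j : Fin (m + 3) => toE (m + 3) (z (k + j.1))) β hβ
      (fun j => hβperp j)
    beta_reduce at hk
    simp only [Fin.val_zero, Nat.add_zero, Fin.val_succ] at hk
    have hone : |(Matrix.of (fun i j : Fin (m + 3) => toE (m + 3) (z (k + j.1)) i)).det|
        = 1 := by
      have hZint := RingHom.map_det (Int.castRingHom ℝ)
        (Matrix.of (fun i j : Fin (m + 3) => z (k + j.1) i))
      have hmm : (Matrix.of (fun i j : Fin (m + 3) => toE (m + 3) (z (k + j.1)) i))
          = (Int.castRingHom ℝ).mapMatrix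
              (Matrix.of (fun i j : Fin (m + 3) => z (k + j.1) i)) := by
        ext i j
        simp [toE, RingHom.mapMatrix_apply, Matrix.map_apply]
      rw [hmm, ← hZint]
      have hunit : IsUnit ((Matrix.of (fun i j : Fin (m + 3) => z (k + j.1) i)).det) := by
        have h0 : IsUnit ((Matrix.of (fun i j : Fin (m + 3) => z (j.1 + k) i)).det) := hbasis
        have heq : (Matrix.of (fun i j : Fin (m + 3) => z (k + j.1) i))
            = (Matrix.of (fun i j : Fin (m + 3) => z (j.1 + k) i)) := by
          ext i j
          simp only [Matrix.of_apply]
          rw [Nat.add_comm k j.1]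
        rw [heq]
        exact h0
      rcases Int.isUnit_iff.mp hunit with h | h <;> rw [h] <;> norm_num
    have hdetA : |(Matrix.of (fun i j : Fin (m + 2) =>
        toE (m + 3) (z (k + (j.1 + 1))) i.castSucc)).det|
        = detL (m + 3) z (k + 1) (m + 2) := by
      rw [detL, gramVol_pr, ← Matrix.det_transpose (Matrix.of (fun i j : Fin (m + 2) =>
        pr (m + 3) (toE (m + 3) (z (k + 1 + i.1))) j))]
      congr 2
      ext i j
      show toE (m + 3) (z (k + (j.1 + 1))) i.castSucc
        = pr (m + 3) (toE (m + 3) (z (k + 1 + j.1))) i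
      rw [show k + (j.1 + 1) = k + 1 + j.1 by omega]
      rfl
    rw [hone, hdetA] at hk
    exact hk.symm
  have hαpi' : α (Fin.last (m + 2)) = 1 := hαpi
  have hα2pi' : α2 (Fin.last (m + 2)) = 1 := hα2pi
  have hα3pi' : α3 (Fin.last (m + 2)) = 1 := hα3pi
  set L2 := detL (m + 3) z 2 (m + 3 - 1) with hL2
  set L3 := detL (m + 3) z 3 (m + 3 - 1) with hL3
  set b := ⟪α3, toE (m + 3) (z 2)⟫_ℝ with hbdef
  set e := ⟪α3, toE (m + 3) (z 1)⟫_ℝ with hedef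
  set a := ⟪α, toE (m + 3) (z 2)⟫_ℝ with hadef
  set c := ⟪α2, toE (m + 3) (z 1)⟫_ℝ with hcdef
  have hid2 : |c| * L2 = 1 := by
    refine hid 1 α2 hbasis1 hα2pi' (fun i => ?_)
    rw [show 1 + i.1 + 1 = i.1 + 2 by omega]
    exact hα2perp i
  have hid3 : |b| * L3 = 1 := by
    refine hid 2 α3 hbasis2 hα3pi' (fun i => ?_)
    rw [show 2 + i.1 + 1 = i.1 + 3 by omega]
    exact hα3perp i
  have hL2nonneg : 0 ≤ L2 := Real.sqrt_nonneg _
  have hL3nonneg : 0 ≤ L3 := Real.sqrt_nonneg _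
  have hL2pos : 0 < L2 := by
    rcases hL2nonneg.lt_or_eq with h | h
    · exact h
    · rw [← h] at hid2; simp at hid2
  have hL3pos : 0 < L3 := by
    rcases hL3nonneg.lt_or_eq with h | h
    · exact h
    · rw [← h] at hid3; simp at hid3
  have hcabs : |c| = 1 / L2 := by field_simp; linarith
  have hbabs : |b| = 1 / L3 := by field_simp; linarith
  -- norms
  have hn1 : 0 < ‖pr (m + 3) (toE (m + 3) (z 1))‖ := norm_pos_iff.mpr hz1
  have hn3 : 0 < ‖pr (m + 3) (toE (m + 3) (z 3))‖ := lt_of_lt_of_le hn1 (h12.trans h23)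
  have hn4 : 0 < ‖pr (m + 3) (toE (m + 3) (z 4))‖ := lt_of_lt_of_le hn3 h34
  -- bound 1 : |a - b| ≤ |b| / 2
  have hsub1 : (α - α3) (Fin.last (m + 2)) = 0 := by
    have h1 : (α - α3) (Fin.last (m + 2)) = α (Fin.last (m + 2)) - α3 (Fin.last (m + 2)) := rfl
    rw [h1, hαpi', hα3pi']
    ring
  have hbound1 : |a - b| ≤ |b| / 2 := by
    have h0 : a - b = ⟪α - α3, toE (m + 3) (z 2)⟫_ℝ := by
      rw [hadef, hbdef, inner_sub_left]
    rw [h0]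
    calc |⟪α - α3, toE (m + 3) (z 2)⟫_ℝ|
        ≤ ‖α - α3‖ * ‖pr (m + 3) (toE (m + 3) (z 2))‖ := abs_inner_le_pr _ _ hsub1
      _ ≤ Rq (m + 3) z 3 * ‖pr (m + 3) (toE (m + 3) (z 2))‖ :=
          mul_le_mul_of_nonneg_right hαS3 (norm_nonneg _)
      _ ≤ |b| / 2 := by
          have h4 : (3 : ℕ) + 1 = 4 := rfl
          have heq : |b| / 2 = 1 / (2 * L3) := by rw [hbabs]; ring
          have hden1 : (0:ℝ) < 2 * ‖pr (m + 3) (toE (m + 3) (z 4))‖ * L3 :=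
            mul_pos (mul_pos two_pos hn4) hL3pos
          have hden2 : (0:ℝ) < 2 * L3 := mul_pos two_pos hL3pos
          rw [Rq, h4, ← hL3, heq, div_mul_eq_mul_div, one_mul,
            div_le_div_iff₀ hden1 hden2]
          nlinarith [hL3pos, h23.trans h34]
  -- bound 2 : |e - c| ≤ |c| / 2
  have hsub2 : (α3 - α2) (Fin.last (m + 2)) = 0 := by
    have h1 : (α3 - α2) (Fin.last (m + 2)) = α3 (Fin.last (m + 2)) - α2 (Fin.last (m + 2)) := rfl
    rw [h1, hα3pi', hα2pi']
    ring
  have hbound2 : |e - c| ≤ |c| / 2 := by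
    have h0 : e - c = ⟪α3 - α2, toE (m + 3) (z 1)⟫_ℝ := by
      rw [hedef, hcdef, inner_sub_left]
    rw [h0]
    calc |⟪α3 - α2, toE (m + 3) (z 1)⟫_ℝ|
        ≤ ‖α3 - α2‖ * ‖pr (m + 3) (toE (m + 3) (z 1))‖ := abs_inner_le_pr _ _ hsub2
      _ ≤ Rq (m + 3) z 2 * ‖pr (m + 3) (toE (m + 3) (z 1))‖ :=
          mul_le_mul_of_nonneg_right hα3S2 (norm_nonneg _)
      _ ≤ |c| / 2 := by
          have h3 : (2 : ℕ) + 1 = 3 := rfl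
          have heq : |c| / 2 = 1 / (2 * L2) := by rw [hcabs]; ring
          have hden1 : (0:ℝ) < 2 * ‖pr (m + 3) (toE (m + 3) (z 3))‖ * L2 :=
            mul_pos (mul_pos two_pos hn3) hL2pos
          have hden2 : (0:ℝ) < 2 * L2 := mul_pos two_pos hL2pos
          rw [Rq, h3, ← hL2, heq, div_mul_eq_mul_div, one_mul,
            div_le_div_iff₀ hden1 hden2]
          nlinarith [hL2pos, h12.trans h23]
  -- final sign chase
  have hcpos : 0 < |c| := by rw [hcabs]; exact one_div_pos.mpr hL2pos
  exact signchase a b c e hsign hbound1 hbound2 hcpos
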